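/- Under the hypotheses of the previous setup, if additionally $G_{\mathcal{A}+}^{-1}\mathbf{1} > 0$ componentwise (the positive cone condition for the enlarged set), then $x_+'u_{\mathcal{A}} < A_{\mathcal{A}}$; that is, the new variable makes a strictly smaller inner product with the old equiangular vector than the common value $A_{\mathcal{A}}$. -/

import Mathlib

open Matrix

lemma aux_posDef_stmt11 {m p : Type*} [Fintype m] [Fintype p] [DecidableEq p]
    (M : Matrix m p ℝ) (h : ∀ c, M *ᵥ c = 0 → c = 0) : (Mᵀ * M).PosDef := by
  refine Matrix.PosDef.of_dotProduct_mulVec_pos (by simpa using isHermitian_conjTranspose_mul_self M) fun x hx => ?_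
  have key : star x ⬝ᵥ (Mᵀ * M) *ᵥ x = (M *ᵥ x) ⬝ᵥ (M *ᵥ x) := by
    rw [star_trivial, ← mulVec_mulVec, dotProduct_mulVec, vecMul_transpose]
  rw [key]
  have hne : M *ᵥ x ≠ 0 := fun hc => hx (h x hc)
  have h0 : (0:ℝ) ≤ (M *ᵥ x) ⬝ᵥ (M *ᵥ x) :=
    Finset.sum_nonneg fun i _ => mul_self_nonneg _
  exact lt_of_le_of_ne h0 (fun hc => hne (dotProduct_self_eq_zero.mp hc.symm))

theorem stmt11 (n k : ℕ) (hk : 0 < k)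
    (XA : Matrix (Fin n) (Fin k) ℝ) (xp : Fin n → ℝ)
    (hli : LinearIndependent ℝ XA.transpose)
    (hunit : xp ⬝ᵥ xp = 1)
    (hspan : xp ∉ Submodule.span ℝ (Set.range XA.transpose)) :
    let G : Matrix (Fin k) (Fin k) ℝ := XA.transpose * XA
    let A : ℝ := (Real.sqrt ((1 : Fin k → ℝ) ⬝ᵥ (G⁻¹ *ᵥ (1 : Fin k → ℝ))))⁻¹
    let u : Fin n → ℝ := A • (XA *ᵥ (G⁻¹ *ᵥ (1 : Fin k → ℝ)))
    let XAp : Matrix (Fin n) (Fin k ⊕ Unit) ℝ :=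
      Matrix.of fun i j => Sum.elim (fun l => XA i l) (fun _ => xp i) j
    let Gp : Matrix (Fin k ⊕ Unit) (Fin k ⊕ Unit) ℝ := XAp.transpose * XAp
    (∀ j, 0 < (Gp⁻¹ *ᵥ (1 : Fin k ⊕ Unit → ℝ)) j) →
      xp ⬝ᵥ u < A := by
  intro G A u XAp Gp hpos
  -- basic facts about XA
  have hmv : ∀ c : Fin k → ℝ, XA *ᵥ c = ∑ l, c l • XA.transpose l := by
    intro c; funext i
    simp [mulVec, dotProduct, Finset.sum_apply, transpose_apply, mul_comm]
  have hinjA : ∀ c, XA *ᵥ c = 0 → c = 0 := by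
    intro c hc
    replace hli := Fintype.linearIndependent_iff.mp hli
    funext l
    exact hli c (by rw [← hmv]; exact hc) l
  have hmem : ∀ c : Fin k → ℝ, XA *ᵥ c ∈ Submodule.span ℝ (Set.range XA.transpose) := by
    intro c
    rw [hmv]
    exact Submodule.sum_mem _ fun l _ =>
      Submodule.smul_mem _ _ (Submodule.subset_span ⟨l, rfl⟩)
  -- injectivity for the enlarged matrix
  have hmvp : ∀ c : (Fin k ⊕ Unit) → ℝ,
      XAp *ᵥ c = XA *ᵥ (c ∘ Sum.inl) + c (Sum.inr ()) • xp := by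
    intro c; funext i
    simp [XAp, mulVec, dotProduct, Fintype.sum_sum_type, mul_comm]
  have hinjAp : ∀ c, XAp *ᵥ c = 0 → c = 0 := by
    intro c hc
    rw [hmvp] at hc
    by_cases h1 : c (Sum.inr ()) = 0
    · rw [h1, zero_smul, add_zero] at hc
      have h0 := hinjA _ hc
      funext j
      rcases j with l | uu
      · exact congrFun h0 l
      · cases uu; exact h1
    · exfalso
      apply hspan
      have hx : xp = (c (Sum.inr ()))⁻¹ • (XA *ᵥ (-(c ∘ Sum.inl))) := by
        have hxx : XA *ᵥ (-(c ∘ Sum.inl)) = c (Sum.inr ()) • xp := by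
          rw [mulVec_neg]; linear_combination (norm := module) -hc
        rw [hxx, smul_smul, inv_mul_cancel₀ h1, one_smul]
      rw [hx]
      exact Submodule.smul_mem _ _ (hmem _)
  -- positive definiteness and invertibility
  have hGPD : G.PosDef := aux_posDef_stmt11 XA hinjA
  have hGpPD : Gp.PosDef := aux_posDef_stmt11 XAp hinjAp
  have hGdet : IsUnit G.det := hGPD.det_pos.ne'.isUnit
  have hGpdet : IsUnit Gp.det := hGpPD.det_pos.ne'.isUnit
  -- the solution vector
  set v : Fin k ⊕ Unit → ℝ := Gp⁻¹ *ᵥ (1 : Fin k ⊕ Unit → ℝ) with hvdef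
  have hv : Gp *ᵥ v = 1 := by
    rw [hvdef, mulVec_mulVec, mul_nonsing_inv _ hGpdet, one_mulVec]
  set b : Fin k → ℝ := XA.transpose *ᵥ xp with hb
  set v₀ : Fin k → ℝ := fun l => v (Sum.inl l) with hv0
  set v₁ : ℝ := v (Sum.inr ()) with hv1
  -- block component equations
  have eq1 : G *ᵥ v₀ + v₁ • b = 1 := by
    funext l
    have h := congrFun hv (Sum.inl l)
    simp only [Gp, XAp, mulVec, dotProduct, Matrix.mul_apply, Fintype.sum_sum_type,
      Finset.sum_mul, transpose_apply, Matrix.of_apply, Sum.elim_inl, Sum.elim_inr,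
      Finset.univ_unique, Finset.sum_singleton, Pi.one_apply] at h
    have t1 : (G *ᵥ v₀) l
        = ∑ x : Fin k, ∑ i : Fin n, XA i l * XA i x * v (Sum.inl x) := by
      simp only [G, mulVec, dotProduct, Matrix.mul_apply, transpose_apply,
        Finset.sum_mul, hv0]
    have t2 : v₁ * b l = ∑ i : Fin n, XA i l * xp i * v (Sum.inr PUnit.unit) := by
      simp only [hb, hv1, mulVec, dotProduct, transpose_apply, Finset.mul_sum]
      exact Finset.sum_congr rfl fun i _ => by ring
    have hgoal : (G *ᵥ v₀ + v₁ • b) l = (G *ᵥ v₀) l + v₁ * b l := rfl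
    rw [hgoal, t1, t2, Pi.one_apply, ← h]
  have eq2 : b ⬝ᵥ v₀ + v₁ = 1 := by
    have h := congrFun hv (Sum.inr ())
    simp only [Gp, XAp, mulVec, dotProduct, Matrix.mul_apply, Fintype.sum_sum_type,
      Finset.sum_mul, transpose_apply, Matrix.of_apply, Sum.elim_inl, Sum.elim_inr,
      Finset.univ_unique, Finset.sum_singleton, Pi.one_apply] at h
    have t3 : b ⬝ᵥ v₀ = ∑ x : Fin k, ∑ i : Fin n, xp i * XA i x * v (Sum.inl x) := by
      simp only [hb, hv0, dotProduct, mulVec, transpose_apply, Finset.sum_mul]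
      refine Finset.sum_congr rfl fun x _ => Finset.sum_congr rfl fun i _ => by ring
    have t4 : ∑ i : Fin n, xp i * xp i * v (Sum.inr PUnit.unit) = v₁ := by
      rw [← Finset.sum_mul]
      have hxx : ∑ i, xp i * xp i = 1 := hunit
      rw [hxx, one_mul, hv1]
    rw [t3]
    linarith [h, t4]
  -- solve for v₀
  have hv0eq : v₀ = G⁻¹ *ᵥ (1 : Fin k → ℝ) - v₁ • (G⁻¹ *ᵥ b) := by
    have h1 : G *ᵥ v₀ = (1 : Fin k → ℝ) - v₁ • b := by
      rw [← eq1]; abel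
    have h2 : G⁻¹ *ᵥ (G *ᵥ v₀) = v₀ := by
      rw [mulVec_mulVec, nonsing_inv_mul _ hGdet, one_mulVec]
    rw [← h2, h1, mulVec_sub, mulVec_smul]
  set t : ℝ := b ⬝ᵥ (G⁻¹ *ᵥ (1 : Fin k → ℝ)) with ht
  set q : ℝ := b ⬝ᵥ (G⁻¹ *ᵥ b) with hq
  have eq3 : v₁ * (1 - q) = 1 - t := by
    have : b ⬝ᵥ v₀ = t - v₁ * q := by
      rw [hv0eq, dotProduct_sub, dotProduct_smul, smul_eq_mul, ht, hq]
    linarith [eq2, this]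
  -- the Schur complement 1 - q is positive
  have hqlt : 0 < 1 - q := by
    set r : Fin n → ℝ := xp - XA *ᵥ (G⁻¹ *ᵥ b) with hr
    have hrne : r ≠ 0 := by
      intro hc
      apply hspan
      have : xp = XA *ᵥ (G⁻¹ *ᵥ b) := by
        have := congrArg (· + XA *ᵥ (G⁻¹ *ᵥ b)) hc
        simpa [hr, sub_add_cancel] using this
      rw [this]; exact hmem _
    have hxw : xp ⬝ᵥ (XA *ᵥ (G⁻¹ *ᵥ b)) = q := by
      rw [dotProduct_mulVec, ← mulVec_transpose, ← hb, hq]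
    have hww : (XA *ᵥ (G⁻¹ *ᵥ b)) ⬝ᵥ (XA *ᵥ (G⁻¹ *ᵥ b)) = q := by
      rw [dotProduct_mulVec, ← mulVec_transpose, mulVec_mulVec]
      have hGw : (XA.transpose * XA) *ᵥ (G⁻¹ *ᵥ b) = b := by
        rw [mulVec_mulVec]
        show (G * G⁻¹) *ᵥ b = b
        rw [mul_nonsing_inv _ hGdet, one_mulVec]
      rw [mulVec_mulVec] at hGw
      rw [mulVec_mulVec, hGw]
    have hrr : r ⬝ᵥ r = 1 - q := by
      rw [hr, sub_dotProduct, dotProduct_sub, dotProduct_sub, hunit, hxw, hww,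
        dotProduct_comm (XA *ᵥ (G⁻¹ *ᵥ b)) xp, hxw]
      ring
    rw [← hrr]
    have h0 : (0:ℝ) ≤ r ⬝ᵥ r := Finset.sum_nonneg fun i _ => mul_self_nonneg _
    exact lt_of_le_of_ne h0 (fun hc => hrne (dotProduct_self_eq_zero.mp hc.symm))
  have hv1pos : 0 < v₁ := hpos (Sum.inr ())
  have htlt : t < 1 := by nlinarith [eq3, hqlt, hv1pos]
  -- A is positive
  have hApos : 0 < A := by
    have hGinvPD : (G⁻¹).PosDef := Matrix.posDef_inv_iff.mpr hGPD
    have hone : (1 : Fin k → ℝ) ≠ 0 := by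
      intro hc
      have := congrFun hc ⟨0, hk⟩
      simp at this
    have h1 : 0 < (1 : Fin k → ℝ) ⬝ᵥ (G⁻¹ *ᵥ (1 : Fin k → ℝ)) := by
      have := hGinvPD.dotProduct_mulVec_pos hone
      simpa using this
    exact inv_pos.mpr (Real.sqrt_pos.mpr h1)
  -- conclude
  have hxu : xp ⬝ᵥ u = A * t := by
    show xp ⬝ᵥ (A • (XA *ᵥ (G⁻¹ *ᵥ (1 : Fin k → ℝ)))) = A * t
    rw [dotProduct_smul, smul_eq_mul, ht, dotProduct_mulVec, ← mulVec_transpose, ← hb]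
  rw [hxu]
  calc A * t < A * 1 := by exact mul_lt_mul_of_pos_left htlt hApos
    _ = A := mul_one A
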